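/- arXiv:1807.05833 — 4 statements merged into one kernel-verified Lean document; each statement's English description precedes it below -/
import Mathlib

section
/- In any I-topological system (X, ⊨, A), x ⊨ ¬a if and only if for all y ∈ X with p*(x) ≤ p*(y), y ⊭ a. -/
/-- An I-topological system: a set `X`, a Heyting algebra `A`, and a satisfaction
relation `Sat` satisfying the four axioms.  The pointwise order `p*(x) ≤ p*(y)` on
the induced maps into `{0,1}` is expressed as `∀ c, Sat x c → Sat y c`. -/
structure ITopSys (X : Type*) (A : Type*) [HeytingAlgebra A] where
  Sat : X → A → Prop
  not_bot : ∀ x : X, ¬ Sat x ⊥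
  sat_inf : ∀ x a b, Sat x (a ⊓ b) ↔ (Sat x a ∧ Sat x b)
  sat_sup : ∀ x a b, Sat x (a ⊔ b) ↔ (Sat x a ∨ Sat x b)
  sat_himp : ∀ x a b, Sat x (a ⇨ b) ↔
    ∀ y : X, (∀ c, Sat x c → Sat y c) → (¬ Sat y a ∨ Sat y b)

/-- A system is Heyting algebraic when the canonical map `p* : X → Hom(A, {0,1})`
(taking values in bounded distributive lattice homomorphisms into `Bool`)
given by `p*(x)(a) = 1 ↔ x ⊨ a` is bijective. -/
def ITopSys.IsHeytingAlgebraic {X A : Type*} [HeytingAlgebra A] (S : ITopSys X A) : Prop :=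
  ∃ p : X → BoundedLatticeHom A Bool,
    (∀ x a, p x a = true ↔ S.Sat x a) ∧ Function.Bijective p

theorem stmt1 {X A : Type*} [Nonempty X] [HeytingAlgebra A] (S : ITopSys X A)
    (x : X) (a : A) :
    S.Sat x (a ⇨ ⊥) ↔ ∀ y : X, (∀ c, S.Sat x c → S.Sat y c) → ¬ S.Sat y a := by
  rw [S.sat_himp]
  constructor
  · intro h y hy
    rcases h y hy with h' | h'
    · exact h'
    · exact absurd h' (S.not_bot y)
  · intro h y hy
    exact Or.inl (h y hy)
end

section
/- For any Heyting algebra A, the triple (Hom(A,{0,1}), ⊨*, A), where v ⊨* a iff v(a) = 1, is an I-topological system. In particular: v ⊨* 0 for no v; v ⊨* a∧b iff v ⊨* a and v ⊨* b; v ⊨* a∨b iff v ⊨* a or v ⊨* b; and v ⊨* a→b iff for all v' ∈ Hom(A,{0,1}) with v ≤ v' pointwise, v' ⊭* a or v' ⊨* b. -/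
open Order

section Aux
variable {A : Type*} [HeytingAlgebra A]

/-- Monotonicity on Bool for a lattice hom. -/
lemma hom_mono (v : BoundedLatticeHom A Bool) {x y : A} (h : x ≤ y)
    (hx : v x = true) : v y = true := by
  have h2 : v (x ⊓ y) = v x ⊓ v y := map_inf v x y
  rw [inf_eq_left.2 h, hx] at h2
  cases hvy : v y <;> rw [hvy] at h2 <;> revert h2 <;> decide

lemma key_himp (v : BoundedLatticeHom A Bool) (a b : A) (hv : ¬ v (a ⇨ b) = true) :
    ∃ w : BoundedLatticeHom A Bool,
      (∀ c, v c = true → w c = true) ∧ w a = true ∧ w b ≠ true := by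
  classical
  -- filter generated by {c | v c = true} ∪ {a}
  set Fset : Set A := {x | ∃ c, v c = true ∧ c ⊓ a ≤ x} with hFset
  have hF : IsPFilter Fset := by
    refine IsPFilter.of_def ⟨⊤, ⊤, by simp [map_top], le_top⟩ ?_ ?_
    · rintro x ⟨c, hc, hcx⟩ y ⟨d, hd, hdy⟩
      refine ⟨x ⊓ y, ⟨c ⊓ d, ?_, ?_⟩, inf_le_left, inf_le_right⟩
      · have h3 : v (c ⊓ d) = v c ⊓ v d := map_inf v c d
        rw [h3, hc, hd]; rfl
      · exact le_inf (le_trans (inf_le_inf_right a inf_le_left) hcx)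
          (le_trans (inf_le_inf_right a inf_le_right) hdy)
    · rintro x y hxy ⟨c, hc, hcx⟩; exact ⟨c, hc, hcx.trans hxy⟩
  have hdisj : Disjoint (Fset) ((Ideal.principal b : Ideal A) : Set A) := by
    rw [Set.disjoint_left]
    rintro x ⟨c, hc, hcx⟩ hxb
    have hxb' : x ≤ b := hxb
    have : c ≤ a ⇨ b := le_himp_iff.2 (hcx.trans hxb')
    exact hv (hom_mono v this hc)
  obtain ⟨J, hJprime, hIJ, hJdisj⟩ :=
    DistribLattice.prime_ideal_of_disjoint_filter_ideal (F := hF.toPFilter) (I := Ideal.principal b)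
      (by exact hdisj)
  -- define w
  have hbot : (⊥ : A) ∈ J := J.bot_mem
  have htop : (⊤ : A) ∉ J := Set.disjoint_left.1 hJdisj (hF.toPFilter.top_mem)
  have hFJ : ∀ x ∈ Fset, x ∉ J := fun x hx => Set.disjoint_left.1 hJdisj hx
  refine ⟨⟨⟨⟨fun x => !decide (x ∈ J), ?_⟩, ?_⟩, ?_, ?_⟩, ?_, ?_, ?_⟩
  · intro x y
    show (!decide (x ⊔ y ∈ J)) = (!decide (x ∈ J)) ⊔ (!decide (y ∈ J))
    have : x ⊔ y ∈ J ↔ x ∈ J ∧ y ∈ J :=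
      ⟨fun h => ⟨J.lower le_sup_left h, J.lower le_sup_right h⟩,
       fun ⟨h1, h2⟩ => J.sup_mem h1 h2⟩
    by_cases h1 : x ∈ J <;> by_cases h2 : y ∈ J <;> simp only [this, h1, h2, and_self, and_false, false_and, decide_true, decide_false] <;> decide
  · intro x y
    show (!decide (x ⊓ y ∈ J)) = (!decide (x ∈ J)) ⊓ (!decide (y ∈ J))
    have : x ⊓ y ∈ J ↔ x ∈ J ∨ y ∈ J :=
      ⟨fun h => hJprime.mem_or_mem h,
       fun h => h.elim (fun h => J.lower inf_le_left h) (fun h => J.lower inf_le_right h)⟩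
    by_cases h1 : x ∈ J <;> by_cases h2 : y ∈ J <;> simp only [this, h1, h2, or_self, or_true, true_or, or_false, false_or, decide_true, decide_false] <;> decide
  · show (!decide ((⊤ : A) ∈ J)) = ⊤; simp [htop]
  · show (!decide ((⊥ : A) ∈ J)) = ⊥; simp [hbot]
  · intro c hc
    show (!decide (c ∈ J)) = true
    simp only [Bool.not_eq_true']
    simpa using hFJ c ⟨c, hc, inf_le_left⟩
  · show (!decide (a ∈ J)) = true
    simpa using hFJ a ⟨⊤, by simp [map_top], by simp⟩
  · show (!decide (b ∈ J)) ≠ true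
    have : b ∈ J := hIJ (Ideal.mem_principal.2 le_rfl)
    simp [this]

end Aux
theorem stmt4 {A : Type*} [HeytingAlgebra A] :
    ∃ S : ITopSys (BoundedLatticeHom A Bool) A,
      ∀ (v : BoundedLatticeHom A Bool) (a : A), S.Sat v a ↔ v a = true := by
  refine ⟨⟨fun v a => v a = true, ?_, ?_, ?_, ?_⟩, fun v a => Iff.rfl⟩
  · intro v h
    rw [map_bot] at h
    exact Bool.false_ne_true h
  · intro v a b
    show v (a ⊓ b) = true ↔ v a = true ∧ v b = true
    have h : v (a ⊓ b) = v a ⊓ v b := map_inf v a b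
    rw [h]
    cases ha : v a <;> cases hb : v b <;> simp_all <;> decide
  · intro v a b
    show v (a ⊔ b) = true ↔ v a = true ∨ v b = true
    have h : v (a ⊔ b) = v a ⊔ v b := map_sup v a b
    rw [h]
    cases ha : v a <;> cases hb : v b <;> simp_all <;> decide
  · intro v a b
    show v (a ⇨ b) = true ↔ ∀ y : BoundedLatticeHom A Bool,
      (∀ c, v c = true → y c = true) → (¬ y a = true ∨ y b = true)
    constructor
    · intro hv y hle
      by_cases hya : y a = true
      swap
      · exact Or.inl hya
      right
      have h1 : y (a ⊓ (a ⇨ b)) = y a ⊓ y (a ⇨ b) := map_inf y a (a ⇨ b)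
      have h2 : y (a ⇨ b) = true := hle _ hv
      have h3 : y (a ⊓ (a ⇨ b)) = true := by rw [h1, hya, h2]; rfl
      exact hom_mono y inf_himp_le h3
    · intro h
      by_contra hv
      obtain ⟨w, hw1, hw2, hw3⟩ := key_himp v a b hv
      rcases h w hw1 with h' | h'
      · exact h' hw2
      · exact hw3 h'
end

section
/- Let A be a Heyting algebra and v ∈ Hom(A,{0,1}). If v(a→b) = 1 and v ≤ v' pointwise for some v' ∈ Hom(A,{0,1}), then v'(a) = 0 or v'(b) = 1. -/
theorem stmt5 {A : Type*} [HeytingAlgebra A] (v v' : BoundedLatticeHom A Bool)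
    (a b : A) (h : v (a ⇨ b) = true) (hle : ∀ c, v c ≤ v' c) :
    v' a = false ∨ v' b = true := by
  rcases Bool.eq_false_or_eq_true (v' a) with ha | ha
  · right
    have himp : v' (a ⇨ b) = true := le_antisymm le_top (h ▸ hle (a ⇨ b))
    have hmono : v' (a ⊓ (a ⇨ b)) ≤ v' b :=
      (OrderHomClass.mono v') (inf_himp_le)
    rw [map_inf, ha, himp] at hmono
    exact le_antisymm le_top hmono
  · exact Or.inl ha
end

section
/- Let A be a Heyting algebra and v ∈ Hom(A,{0,1}). If v(a→b) = 0 then there exists w ∈ Hom(A,{0,1}) with v ≤ w pointwise, w(a) = 1 and w(b) = 0. -/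
theorem stmt6 {A : Type*} [HeytingAlgebra A] (v : BoundedLatticeHom A Bool)
    (a b : A) (h : v (a ⇨ b) = false) :
    ∃ w : BoundedLatticeHom A Bool, (∀ c, v c ≤ w c) ∧ w a = true ∧ w b = false := by
  classical
  -- the filter generated by v⁻¹(true) ∪ {a}
  have hF : Order.IsPFilter {c : A | ∃ u, v u = true ∧ u ⊓ a ≤ c} := by
    refine Order.IsPFilter.of_def ⟨a, ⊤, by simp, by simp⟩ ?_ ?_
    · rintro c ⟨u1, hu1, h1⟩ d ⟨u2, hu2, h2⟩
      refine ⟨c ⊓ d, ⟨u1 ⊓ u2, by simp [hu1, hu2], ?_⟩, inf_le_left, inf_le_right⟩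
      exact le_inf (le_trans (by gcongr; exact inf_le_left) h1)
        (le_trans (by gcongr; exact inf_le_right) h2)
    · rintro x y hxy ⟨u, hu, hle⟩
      exact ⟨u, hu, hle.trans hxy⟩
  set F : Order.PFilter A := hF.toPFilter with hFdef
  have memF : ∀ c, c ∈ F ↔ ∃ u, v u = true ∧ u ⊓ a ≤ c := fun c => Iff.rfl
  have hdisj : Disjoint (F : Set A) ((Order.Ideal.principal b : Order.Ideal A) : Set A) := by
    rw [Set.disjoint_left]
    rintro c ⟨u, hu, hle⟩ hcb
    have hcb' : c ≤ b := hcb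
    have : u ≤ a ⇨ b := le_himp_iff.2 (hle.trans hcb')
    have := OrderHomClass.mono v this
    rw [hu, h] at this
    exact absurd this (by simp)
  obtain ⟨J, hJprime, hIJ, hJF⟩ :=
    DistribLattice.prime_ideal_of_disjoint_filter_ideal hdisj
  have hbJ : b ∈ J := hIJ (Order.Ideal.mem_principal.2 le_rfl)
  have haF : a ∈ F := ⟨⊤, by simp, by simp⟩
  have hnot : ∀ c ∈ F, c ∉ J := fun c hc => Set.disjoint_left.1 hJF hc
  refine ⟨⟨⟨⟨fun c => decide (c ∉ J), ?_⟩, ?_⟩, ?_, ?_⟩, ?_, ?_, ?_⟩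
  · -- map_sup
    intro c d
    have : c ⊔ d ∈ J ↔ c ∈ J ∧ d ∈ J :=
      ⟨fun hm => ⟨J.lower le_sup_left hm, J.lower le_sup_right hm⟩,
       fun ⟨h1, h2⟩ => J.sup_mem h1 h2⟩
    simp only [this]
    by_cases h1 : c ∈ J <;> by_cases h2 : d ∈ J <;> simp [h1, h2]
  · -- map_inf
    intro c d
    have : c ⊓ d ∈ J ↔ c ∈ J ∨ d ∈ J :=
      ⟨fun hm => hJprime.mem_or_mem hm,
       fun hm => hm.elim (J.lower inf_le_left) (J.lower inf_le_right)⟩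
    simp only [this]
    by_cases h1 : c ∈ J <;> by_cases h2 : d ∈ J <;> simp [h1, h2]
  · -- map_top
    have : (⊤ : A) ∉ J := hnot ⊤ Order.PFilter.top_mem
    simp [this]
  · -- map_bot
    simp [J.bot_mem]
  · -- pointwise
    intro c
    rcases hvc : v c with _ | _
    · simp
    · have : c ∈ F := ⟨c, hvc, inf_le_left⟩
      simp [BoundedLatticeHom.coe_mk, LatticeHom.coe_mk, SupHom.coe_mk, hnot c this]
  · simp [BoundedLatticeHom.coe_mk, LatticeHom.coe_mk, SupHom.coe_mk, hnot a haF]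
  · simp [BoundedLatticeHom.coe_mk, LatticeHom.coe_mk, SupHom.coe_mk, hbJ]
end
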